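/- Let (X,p) be a partial metric space, let I be a nontrivial admissible ideal of subsets of ℕ, let r ≥ 0, and let (a_n) and (b_n) be two sequences in X such that p(a_n, b_n) → 0 as n → ∞. If (a_n) is rough I-convergent to a point a ∈ X of roughness degree r and c is a positive real number such that p(a_n, a_n) ≤ c for all n ∈ ℕ, then (b_n) is rough I-convergent to a of roughness degree r + c. -/

import Mathlib

/-- A partial metric on `X` (Matthews): nonnegativity with small self-distances,
indistancy implies equality, symmetry, and the modified triangle inequality. -/
structure IsPartialMetric {X : Type*} (p : X → X → ℝ) : Prop where
  self_nonneg : ∀ x : X, 0 ≤ p x x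
  self_le : ∀ x y : X, p x x ≤ p x y
  eq_iff : ∀ x y : X, x = y ↔ (p x x = p x y ∧ p x y = p y y)
  symm : ∀ x y : X, p x y = p y x
  triangle : ∀ x y z : X, p x y ≤ p x z + p z y - p z z

/-- An ideal of subsets of `ℕ`. -/
structure IsIdeal (I : Set (Set ℕ)) : Prop where
  empty_mem : (∅ : Set ℕ) ∈ I
  union_mem : ∀ A B : Set ℕ, A ∈ I → B ∈ I → A ∪ B ∈ I
  subset_mem : ∀ A B : Set ℕ, A ∈ I → B ⊆ A → B ∈ I

/-- A nontrivial admissible ideal of subsets of `ℕ`. -/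
structure IsAdmissibleIdeal (I : Set (Set ℕ)) extends IsIdeal I : Prop where
  univ_not_mem : (Set.univ : Set ℕ) ∉ I
  ne_empty_singleton : I ≠ {∅}
  singleton_mem : ∀ n : ℕ, ({n} : Set ℕ) ∈ I

/-- `(x n)` is rough `I`-convergent to `x₀` of roughness degree `r` w.r.t. the
partial metric `p`. -/
def RoughIdealConv {X : Type*} (I : Set (Set ℕ)) (p : X → X → ℝ)
    (x : ℕ → X) (r : ℝ) (x₀ : X) : Prop :=
  ∀ ε : ℝ, 0 < ε → {n : ℕ | r + ε ≤ |p (x n) x₀ - p x₀ x₀|} ∈ I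

theorem rough_ideal_conv_transfer_degree
    {X : Type*} [Nonempty X] (p : X → X → ℝ) (hp : IsPartialMetric p)
    (I : Set (Set ℕ)) (hI : IsAdmissibleIdeal I)
    (r : ℝ) (hr : 0 ≤ r) (a b : ℕ → X)
    (hab : Filter.Tendsto (fun n => p (a n) (b n)) Filter.atTop (nhds 0))
    (x₀ : X) (ha : RoughIdealConv I p a r x₀)
    (c : ℝ) (hc : 0 < c) (haa : ∀ n : ℕ, p (a n) (a n) ≤ c) :
    RoughIdealConv I p b (r + c) x₀ := by
  intro ε hε
  have hε2 : 0 < ε / 2 := by linarith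
  have hA := ha (ε / 2) hε2
  obtain ⟨N, hN⟩ := Metric.tendsto_atTop.mp hab (ε / 2) hε2
  have hBI : {n : ℕ | n < N} ∈ I := by
    clear hN
    induction N with
    | zero => simpa using hI.empty_mem
    | succ k ih =>
      have h : {n : ℕ | n < k + 1} = {n : ℕ | n < k} ∪ {k} := by
        ext n; simp only [Set.mem_setOf_eq, Set.mem_union, Set.mem_singleton_iff]; constructor <;> intro h <;> omega
      rw [h]; exact hI.union_mem _ _ ih (hI.singleton_mem k)
  apply hI.subset_mem _ _ (hI.union_mem _ _ hA hBI)
  intro n hn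
  simp only [Set.mem_setOf_eq] at hn
  by_contra hmem
  simp only [Set.mem_union, Set.mem_setOf_eq] at hmem
  push_neg at hmem
  obtain ⟨h1, h2⟩ := hmem
  have hdist := hN n h2
  rw [Real.dist_eq, sub_zero] at hdist
  have hab_nonneg : 0 ≤ p (a n) (b n) := le_trans (hp.self_nonneg _) (hp.self_le _ _)
  rw [abs_of_nonneg hab_nonneg] at hdist
  have t1 : p (b n) x₀ ≤ p (b n) (a n) + p (a n) x₀ - p (a n) (a n) := hp.triangle _ _ _
  have t2 : p (a n) x₀ ≤ p (a n) (b n) + p (b n) x₀ - p (b n) (b n) := hp.triangle _ _ _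
  have hsym : p (b n) (a n) = p (a n) (b n) := hp.symm _ _
  have hbb : 0 ≤ p (b n) (b n) := hp.self_nonneg _
  have haan : 0 ≤ p (a n) (a n) := hp.self_nonneg _
  have hdiff : |p (b n) x₀ - p (a n) x₀| ≤ p (a n) (b n) := by
    rw [abs_le]; constructor <;> linarith
  have key : |p (b n) x₀ - p x₀ x₀| ≤ |p (a n) x₀ - p x₀ x₀| + |p (b n) x₀ - p (a n) x₀| := by
    have h := abs_add_le (p (a n) x₀ - p x₀ x₀) (p (b n) x₀ - p (a n) x₀)
    have e : p (a n) x₀ - p x₀ x₀ + (p (b n) x₀ - p (a n) x₀) = p (b n) x₀ - p x₀ x₀ := by ring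
    rwa [e] at h
  linarith
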